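/- arXiv:1510.01661 — 2 statements merged into one kernel-verified Lean document; each statement's English description precedes it below -/
import Mathlib

section
/- Let Λ be a commutative ring, ξ ∈ Λ, and suppose h is a Λ-algebra with an ideal I such that h/I ≅ Λ/(ξ) as Λ-algebras and Fitt_{h/I}(I/I²) = 0. Then Fitt_Λ(I/I²) ⊆ (ξ). -/
/-- The 0-th Fitting ideal of an `A`-module `M`: generated by the `n × n` minors
(determinants of square matrices of relations) of any presentation `A^n ↠ M`. -/
noncomputable def fittingIdeal (A : Type*) [CommRing A] (M : Type*) [AddCommGroup M]
    [Module A M] : Ideal A :=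
  ⨆ (n : ℕ) (f : (Fin n → A) →ₗ[A] M) (_ : Function.Surjective f),
    Ideal.span {d : A | ∃ X : Matrix (Fin n) (Fin n) A, (∀ i, f (X i) = 0) ∧ X.det = d}

lemma cotangent_mk_smul {h : Type*} [CommRing h] (I : Ideal h) (x : h) (m : I.Cotangent) :
    Ideal.Quotient.mk I x • m = x • m := by
  obtain ⟨m, rfl⟩ := I.toCotangent_surjective m
  rw [← LinearMap.map_smul]
  rfl

/-- If `h` is a `Λ`-algebra with ideal `I` such that `h/I ≅ Λ/(ξ)` as `Λ`-algebras
and `Fitt_{h/I}(I/I²) = 0`, then `Fitt_Λ(I/I²) ⊆ (ξ)`. Here `I/I²` is the cotangent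
module `I.Cotangent`, viewed as a `Λ`-module via `Λ → h`. -/
theorem fittingIdeal_cotangent_le (Λ : Type*) [CommRing Λ] (ξ : Λ)
    (h : Type*) [CommRing h] [Algebra Λ h] (I : Ideal h)
    [Module.FinitePresentation h I]
    (e : (h ⧸ I) ≃ₐ[Λ] Λ ⧸ Ideal.span {ξ})
    (hfit : fittingIdeal (h ⧸ I) I.Cotangent = ⊥) :
    fittingIdeal Λ I.Cotangent ≤ Ideal.span {ξ} := by
  unfold fittingIdeal
  refine iSup_le fun n => iSup_le fun f => iSup_le fun hf => Ideal.span_le.2 ?_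
  rintro d ⟨X, hX, rfl⟩
  set φ : Λ →+* (h ⧸ I) := algebraMap Λ (h ⧸ I) with hφ
  have hφ' : ∀ r : Λ, φ r = Ideal.Quotient.mk I (algebraMap Λ h r) := fun r =>
    IsScalarTower.algebraMap_apply Λ h (h ⧸ I) r
  set m : Fin n → I.Cotangent := fun i => f (fun j => if i = j then 1 else 0) with hm
  set g : (Fin n → (h ⧸ I)) →ₗ[h ⧸ I] I.Cotangent :=
    Fintype.linearCombination (h ⧸ I) m with hg
  have key : ∀ c : Fin n → Λ, g (fun i => φ (c i)) = f c := by
    intro c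
    rw [f.pi_apply_eq_sum_univ c, hg, Fintype.linearCombination_apply]
    refine Finset.sum_congr rfl fun i _ => ?_
    rw [hφ', cotangent_mk_smul, algebraMap_smul]
  have gsurj : Function.Surjective g := by
    intro x
    obtain ⟨c, rfl⟩ := hf x
    exact ⟨fun i => φ (c i), key c⟩
  have mem : (X.map φ).det ∈ fittingIdeal (h ⧸ I) I.Cotangent := by
    have hle : Ideal.span {d : h ⧸ I | ∃ Y : Matrix (Fin n) (Fin n) (h ⧸ I),
        (∀ i, g (Y i) = 0) ∧ Y.det = d} ≤ fittingIdeal (h ⧸ I) I.Cotangent :=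
      le_iSup_of_le n (le_iSup_of_le g (le_iSup_of_le gsurj le_rfl))
    refine hle (Ideal.subset_span ⟨X.map φ, fun i => ?_, rfl⟩)
    have : g ((X.map φ) i) = f (X i) := key (X i)
    rw [this, hX i]
  rw [hfit, Ideal.mem_bot] at mem
  have mem' : φ X.det = 0 := by rw [RingHom.map_det]; exact mem
  have : algebraMap Λ (Λ ⧸ Ideal.span {ξ}) X.det = 0 := by
    rw [← e.commutes X.det]
    show e (φ X.det) = 0
    rw [mem', map_zero]
  rwa [Ideal.Quotient.algebraMap_eq, Ideal.Quotient.eq_zero_iff_mem] at this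
end

section
/- Let Λ = 𝒪[[T]] over a complete discrete valuation ring 𝒪, and M a finitely generated Λ-module. Then M is torsion with projective dimension ≤ 1 if and only if M is torsion and M has no nonzero finite submodule. -/
set_option linter.unusedSectionVars false
set_option linter.unusedVariables false
set_option linter.unnecessarySimpa false
set_option maxHeartbeats 1000000

open PowerSeries

section Scalars
variable {O : Type*} [CommRing O] [IsDomain O] [IsDiscreteValuationRing O]
variable {p : O} (hp : Irreducible p)

/-- If every coefficient is divisible by `p`, the series is divisible by `C p`. -/
theorem aux_dvd_of_coeff (f : PowerSeries O) (h : ∀ n, p ∣ coeff n f) :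
    ∃ g, f = C p * g := by
  refine ⟨PowerSeries.mk fun n => (h n).choose, ?_⟩
  ext n
  rw [coeff_C_mul, coeff_mk]
  exact (h n).choose_spec

include hp in
theorem aux_Cp_ne_zero : (C p : PowerSeries O) ≠ 0 := by
  intro h
  exact hp.ne_zero (by simpa using congrArg (constantCoeff) h)

include hp in
/-- Key divisibility: if `X * a = C p * b` then `a = C p * z` and `b = X * z`. -/
theorem aux_key_div {a b : PowerSeries O} (h : X * a = C p * b) :
    ∃ z, a = C p * z ∧ b = X * z := by
  have hda : ∀ n, p ∣ coeff n a := by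
    intro n
    have : coeff (n + 1) (X * a) = coeff (n + 1) (C p * b) := by rw [h]
    rw [coeff_succ_X_mul, coeff_C_mul] at this
    exact Dvd.intro _ this.symm
  obtain ⟨z, hz⟩ := aux_dvd_of_coeff a hda
  refine ⟨z, hz, ?_⟩
  have h2 : C p * b = C p * (X * z) := by
    rw [← h, hz]; ring
  exact mul_left_cancel₀ (aux_Cp_ne_zero hp) h2

end Scalars

section Proj
variable {O : Type*} [CommRing O] [IsDomain O] [IsDiscreteValuationRing O]
variable {p : O} (hp : Irreducible p)

variable {K : Type*} [AddCommGroup K] [Module (PowerSeries O) K]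

include hp in
theorem aux_proj_div [Module.Projective (PowerSeries O) K] {u1 u2 : K}
    (h : (X : PowerSeries O) • u1 = (C p : PowerSeries O) • u2) :
    ∃ c : K, (C p : PowerSeries O) • c = u1 := by
  obtain ⟨s, hs⟩ := Module.projective_def.mp ‹Module.Projective (PowerSeries O) K›
  classical
  set q : PowerSeries O → PowerSeries O :=
    fun t => if h : (C p : PowerSeries O) ∣ t then h.choose else 0 with hqdef
  have hq : ∀ t, (C p : PowerSeries O) ∣ t → C p * q t = t := by
    intro t ht
    simp only [hqdef, dif_pos ht]
    exact ht.choose_spec.symm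
  have hq0 : q 0 = 0 := by
    have h0 : (C p : PowerSeries O) ∣ 0 := dvd_zero _
    have := hq 0 h0
    rcases mul_eq_zero.mp this with h' | h'
    · exact absurd h' (aux_Cp_ne_zero hp)
    · simpa [hqdef, dif_pos h0] using h'
  have hrel : (X : PowerSeries O) • s u1 = (C p : PowerSeries O) • s u2 := by
    rw [← map_smul, ← map_smul, h]
  have hdvd : ∀ a : K, (C p : PowerSeries O) ∣ s u1 a := by
    intro a
    have := congrArg (fun w => w a) hrel
    simp only [Finsupp.smul_apply, smul_eq_mul] at this
    obtain ⟨z, hz, -⟩ := aux_key_div hp this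
    exact ⟨z, hz⟩
  refine ⟨Finsupp.linearCombination (PowerSeries O) id ((s u1).mapRange q hq0), ?_⟩
  rw [← map_smul]
  have : (C p : PowerSeries O) • (s u1).mapRange q hq0 = s u1 := by
    refine Finsupp.ext fun a => ?_
    simp only [Finsupp.smul_apply, Finsupp.mapRange_apply, smul_eq_mul]
    exact hq _ (hdvd a)
  rw [this, hs u1]

variable {M : Type*} [AddCommGroup M] [Module (PowerSeries O) M]

include hp in
theorem aux_forward_core {n : ℕ} (f : (Fin n → PowerSeries O) →ₗ[PowerSeries O] M)
    (hf : Function.Surjective f) [Module.Projective (PowerSeries O) (LinearMap.ker f)]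
    {y : M} (hy1 : (C p : PowerSeries O) • y = 0) (hy2 : (X : PowerSeries O) • y = 0) :
    y = 0 := by
  obtain ⟨v, hv⟩ := hf y
  have h1 : (C p : PowerSeries O) • v ∈ LinearMap.ker f := by
    rw [LinearMap.mem_ker, map_smul, hv, hy1]
  have h2 : (X : PowerSeries O) • v ∈ LinearMap.ker f := by
    rw [LinearMap.mem_ker, map_smul, hv, hy2]
  have hrel : (X : PowerSeries O) • (⟨_, h1⟩ : LinearMap.ker f) =
      (C p : PowerSeries O) • (⟨_, h2⟩ : LinearMap.ker f) := by
    apply Subtype.ext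
    show (X : PowerSeries O) • ((C p : PowerSeries O) • v) =
      (C p : PowerSeries O) • ((X : PowerSeries O) • v)
    rw [smul_smul, smul_smul, mul_comm]
  obtain ⟨c, hc⟩ := @aux_proj_div O _ _ _ p hp (LinearMap.ker f) _ _ ‹_› _ _ hrel
  have hcoe : (C p : PowerSeries O) • (c : Fin n → PowerSeries O) =
      (C p : PowerSeries O) • v := congrArg Subtype.val hc
  have hcv : (c : Fin n → PowerSeries O) = v := by
    funext i
    have := congrFun hcoe i
    simp only [Pi.smul_apply, smul_eq_mul] at this
    exact mul_left_cancel₀ (aux_Cp_ne_zero hp) this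
  rw [← hv, ← hcv]
  exact c.2

end Proj

section Tors
variable {O : Type*} [CommRing O] [IsDomain O] [IsDiscreteValuationRing O]
variable {p : O} (hp : Irreducible p)
variable {M : Type*} [AddCommGroup M] [Module (PowerSeries O) M]

include hp in
theorem aux_unit_C (e : ℕ) (he : e ≠ 0) : IsUnit (1 - (C p : PowerSeries O) ^ e) := by
  rw [PowerSeries.isUnit_iff_constantCoeff]
  have : constantCoeff (1 - (C p : PowerSeries O) ^ e) = 1 - p ^ e := by
    simp [map_sub, map_pow]
  rw [this]
  apply IsLocalRing.isUnit_one_sub_self_of_mem_nonunits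
  intro hu
  exact hp.not_isUnit ((isUnit_pow_iff he).mp hu)

theorem aux_unit_X (e : ℕ) (he : e ≠ 0) : IsUnit (1 - (X : PowerSeries O) ^ e) := by
  rw [PowerSeries.isUnit_iff_constantCoeff]
  have : constantCoeff (1 - (X : PowerSeries O) ^ e) = 1 := by
    simp [map_sub, map_pow, constantCoeff_X, zero_pow he]
  rw [this]; exact isUnit_one

/-- In a finite submodule, some power of `t` kills `x`, provided `1 - t^e` are units. -/
theorem aux_kill (t : PowerSeries O) (ht : ∀ e : ℕ, e ≠ 0 → IsUnit (1 - t ^ e))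
    {P : Submodule (PowerSeries O) M} (hP : (P : Set M).Finite) {x : M} (hx : x ∈ P) :
    ∃ k, t ^ k • x = 0 := by
  haveI : Finite P := hP.to_subtype
  obtain ⟨i, j, hij, hmap⟩ := Finite.exists_ne_map_eq_of_infinite
    (fun k : ℕ => (⟨t ^ k • x, P.smul_mem _ hx⟩ : P))
  wlog hlt : i < j generalizing i j
  · exact this j i hij.symm hmap.symm (by omega)
  have heq : t ^ i • x = t ^ j • x := congrArg Subtype.val hmap
  have hw : t ^ i • x = t ^ (j - i) • (t ^ i • x) := by
    rw [smul_smul, ← pow_add]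
    rw [Nat.sub_add_cancel hlt.le]
    exact heq
  have hz : (1 - t ^ (j - i)) • (t ^ i • x) = 0 := by
    rw [sub_smul, one_smul, ← hw, sub_self]
  obtain ⟨u, hu⟩ := ht (j - i) (by omega)
  refine ⟨i, ?_⟩
  calc t ^ i • x = ((↑u⁻¹ : PowerSeries O) * (1 - t ^ (j - i))) • (t ^ i • x) := by
        rw [← hu, Units.inv_mul, one_smul]
    _ = (↑u⁻¹ : PowerSeries O) • ((1 - t ^ (j - i)) • (t ^ i • x)) := by rw [mul_smul]
    _ = 0 := by rw [hz, smul_zero]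

include hp in
/-- A nonzero finite submodule contains a nonzero element killed by `C p` and `X`. -/
theorem aux_exists_y {P : Submodule (PowerSeries O) M} (hP : (P : Set M).Finite)
    {x : M} (hx : x ∈ P) (hx0 : x ≠ 0) :
    ∃ y : M, y ≠ 0 ∧ (C p : PowerSeries O) • y = 0 ∧ (X : PowerSeries O) • y = 0 := by
  have hkC : ∃ k, (C p : PowerSeries O) ^ k • x = 0 :=
    aux_kill (C p) (aux_unit_C hp) hP hx
  classical
  set k0 := Nat.find hkC with hk0
  have hk0spec := Nat.find_spec hkC
  have hk0pos : k0 ≠ 0 := by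
    intro h
    rw [← hk0, h, pow_zero, one_smul] at hk0spec
    exact hx0 hk0spec
  set x' := (C p : PowerSeries O) ^ (k0 - 1) • x with hx'
  have hx'0 : x' ≠ 0 := Nat.find_min hkC (by omega)
  have hpx' : (C p : PowerSeries O) • x' = 0 := by
    rw [hx', smul_smul, ← pow_succ']
    rw [show k0 - 1 + 1 = k0 from by omega]
    exact hk0spec
  have hx'P : x' ∈ P := P.smul_mem _ hx
  have hkX : ∃ k, (X : PowerSeries O) ^ k • x' = 0 := aux_kill X aux_unit_X hP hx'P
  set k1 := Nat.find hkX with hk1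
  have hk1spec := Nat.find_spec hkX
  have hk1pos : k1 ≠ 0 := by
    intro h
    rw [← hk1, h, pow_zero, one_smul] at hk1spec
    exact hx'0 hk1spec
  refine ⟨(X : PowerSeries O) ^ (k1 - 1) • x', Nat.find_min hkX (by omega), ?_, ?_⟩
  · rw [smul_comm, hpx', smul_zero]
  · rw [smul_smul, ← pow_succ']
    rw [show k1 - 1 + 1 = k1 from by omega]
    exact hk1spec

include hp in
/-- If `y` is killed by `C p` and `X` then its span is finite (finite residue field). -/
theorem aux_span_finite [Finite (IsLocalRing.ResidueField O)] {y : M}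
    (hy1 : (C p : PowerSeries O) • y = 0) (hy2 : (X : PowerSeries O) • y = 0) :
    ((Submodule.span (PowerSeries O) {y} : Submodule (PowerSeries O) M) : Set M).Finite := by
  classical
  set φ : O → M := fun a => (C a : PowerSeries O) • y with hφ
  have hφeq : ∀ a b : O, Ideal.Quotient.mk (IsLocalRing.maximalIdeal O) a =
      Ideal.Quotient.mk (IsLocalRing.maximalIdeal O) b → φ a = φ b := by
    intro a b hab
    have hmem : a - b ∈ IsLocalRing.maximalIdeal O := Ideal.Quotient.eq.mp hab
    rw [hp.maximalIdeal_eq, Ideal.mem_span_singleton] at hmem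
    obtain ⟨c, hc⟩ := hmem
    have : φ a - φ b = (C (a - b) : PowerSeries O) • y := by
      rw [hφ]; simp only [map_sub, sub_smul]
    have h0 : (C (a - b) : PowerSeries O) • y = 0 := by
      rw [hc, map_mul, mul_comm, mul_smul, hy1, smul_zero]
    have := this.trans h0
    exact sub_eq_zero.mp this
  set g : IsLocalRing.ResidueField O → M :=
    fun t => φ (Function.surjInv Ideal.Quotient.mk_surjective t) with hg
  have hrange : ((Submodule.span (PowerSeries O) {y} : Submodule (PowerSeries O) M) : Set M)
      ⊆ Set.range g := by
    rintro m hm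
    rw [SetLike.mem_coe, Submodule.mem_span_singleton] at hm
    obtain ⟨d, rfl⟩ := hm
    refine ⟨Ideal.Quotient.mk _ (constantCoeff d), ?_⟩
    have h1 : g (Ideal.Quotient.mk _ (constantCoeff d)) = φ (constantCoeff d) := by
      rw [hg]
      exact hφeq _ _ (Function.surjInv_eq Ideal.Quotient.mk_surjective _)
    rw [h1]
    -- φ c₀ = d • y
    have hX : (X : PowerSeries O) ∣ d - C (constantCoeff d) := by
      rw [PowerSeries.X_dvd_iff, map_sub, PowerSeries.constantCoeff_C, sub_self]
    obtain ⟨e, he⟩ := hX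
    have : d • y - φ (constantCoeff d) = ((d - C (constantCoeff d)) : PowerSeries O) • y := by
      rw [hφ]; simp only [sub_smul]
    rw [he, mul_comm, mul_smul, hy2, smul_zero] at this
    exact (sub_eq_zero.mp this).symm
  exact Set.Finite.subset (Set.finite_range g) hrange

end Tors

section Noeth
variable {O : Type*} [CommRing O]

theorem aux_ord_factor (I : Ideal (PowerSeries O)) (N : ℕ) (G : PowerSeries O) (hGI : G ∈ I)
    (hGord : ∀ j, j < N → coeff j G = 0)
    (hb : ∀ h' ∈ I, ∀ k, N ≤ k → (∀ j, j < k → coeff j h' = 0) →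
      ∃ c : O, coeff k h' = c * coeff N G)
    {h : PowerSeries O} (hhI : h ∈ I) (hord : ∀ j, j < N → coeff j h = 0) :
    ∃ u, h = u * G := by
  classical
  let T : ℕ → Type _ := fun d =>
    {h' : PowerSeries O // h' ∈ I ∧ ∀ j, j < N + d → coeff j h' = 0}
  -- the coefficient extracted at stage d
  let co : ∀ d, T d → O := fun d x =>
    (hb x.1 x.2.1 (N + d) (Nat.le_add_right _ _) x.2.2).choose
  have hco : ∀ d (x : T d), coeff (N + d) x.1 = co d x * coeff N G := fun d x =>
    (hb x.1 x.2.1 (N + d) (Nat.le_add_right _ _) x.2.2).choose_spec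
  -- the step construction
  have hstep : ∀ d (x : T d),
      (x.1 - X ^ d * (C (co d x) * G)) ∈ I ∧
      ∀ j, j < N + (d + 1) → coeff j (x.1 - X ^ d * (C (co d x) * G)) = 0 := by
    intro d x
    refine ⟨I.sub_mem x.2.1 (I.mul_mem_left _ (I.mul_mem_left _ hGI)), ?_⟩
    intro j hj
    rw [map_sub, coeff_X_pow_mul', coeff_C_mul]
    by_cases hdj : d ≤ j
    · rw [if_pos hdj]
      rcases lt_or_eq_of_le (Nat.lt_succ_iff.mp (by omega : j < N + d + 1)) with hlt | heq
      · rw [x.2.2 j hlt, hGord (j - d) (by omega), mul_zero, sub_zero]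
      · subst heq
        rw [show N + d - d = N from by omega, hco d x, sub_self]
    · rw [if_neg hdj, sub_zero]
      exact x.2.2 j (by omega)
  let step : ∀ d, T d → T (d + 1) := fun d x => ⟨_, hstep d x⟩
  let seq : ∀ d, T d := fun d => Nat.rec (⟨h, hhI, fun j hj => hord j (by omega)⟩ : T 0)
    (fun d x => step d x) d
  let c : ℕ → O := fun d => co d (seq d)
  have hseq : ∀ d, (seq (d + 1)).1 = (seq d).1 - X ^ d * (C (c d) * G) := fun d => rfl
  -- partial sum identity
  have hpartial : ∀ d, h = (seq d).1 +
      (∑ e ∈ Finset.range d, X ^ e * C (c e)) * G := by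
    intro d
    induction d with
    | zero => simp [seq]
    | succ d ih =>
      rw [Finset.sum_range_succ, hseq d, ih]
      ring
  refine ⟨PowerSeries.mk c, ?_⟩
  ext j
  have hpj := congrArg (coeff j) (hpartial (j + 1))
  rw [map_add, (seq (j + 1)).2.2 j (by omega), zero_add] at hpj
  rw [hpj, coeff_mul, coeff_mul]
  apply Finset.sum_congr rfl
  rintro ⟨a, b⟩ hab
  have ha : a ≤ j := by
    have := Finset.HasAntidiagonal.mem_antidiagonal.mp hab
    omega
  congr 1
  -- coeff a of partial sum equals coeff a of mk c
  rw [coeff_mk]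
  rw [map_sum]
  rw [Finset.sum_eq_single a]
  · rw [coeff_X_pow_mul', if_pos le_rfl, Nat.sub_self, coeff_zero_eq_constantCoeff, constantCoeff_C]
  · intro e he hea
    rw [coeff_X_pow_mul', coeff_C]
    rcases le_or_gt e a with h1 | h1
    · rw [if_pos h1, if_neg (by omega)]
    · rw [if_neg (by omega)]
  · intro hnot
    exact absurd (Finset.mem_range.mpr (by omega)) hnot

end Noeth

section Noeth2
variable {O : Type*} [CommRing O]

theorem aux_noetherian [IsDomain O] [IsPrincipalIdealRing O] :
    IsNoetherianRing (PowerSeries O) := by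
  rw [isNoetherianRing_iff_ideal_fg]
  intro I
  classical
  set cs : ℕ → Set O := fun k =>
    {a | ∃ f, f ∈ I ∧ (∀ j, j < k → coeff j f = 0) ∧ coeff k f = a} with hcs
  set J : ℕ → Ideal O := fun k => Ideal.span (cs k) with hJ
  -- witness extraction
  have W : ∀ k, ∀ b ∈ J k, ∃ f, f ∈ I ∧ (∀ j, j < k → coeff j f = 0) ∧ coeff k f = b := by
    intro k b hb
    obtain ⟨l, hls, hlsum⟩ := Submodule.mem_span_set.mp hb
    set F : O → PowerSeries O := fun a => if h : a ∈ cs k then h.choose else 0 with hF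
    have hFspec : ∀ a ∈ cs k, F a ∈ I ∧ (∀ j, j < k → coeff j (F a) = 0) ∧
        coeff k (F a) = a := by
      intro a ha
      rw [hF]; simp only [dif_pos ha]
      exact ha.choose_spec
    refine ⟨l.sum fun a r => C r * F a, ?_, ?_, ?_⟩
    · apply Ideal.sum_mem
      intro a ha
      exact I.mul_mem_left _ (hFspec a (hls ha)).1
    · intro j hj
      rw [Finsupp.sum, map_sum]
      apply Finset.sum_eq_zero
      intro a ha
      rw [coeff_C_mul, (hFspec a (hls ha)).2.1 j hj, mul_zero]
    · rw [Finsupp.sum, map_sum, ← hlsum, Finsupp.sum]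
      apply Finset.sum_congr rfl
      intro a ha
      rw [coeff_C_mul, (hFspec a (hls ha)).2.2, smul_eq_mul]
  have hmono : Monotone J := by
    apply monotone_nat_of_le_succ
    intro k
    apply Ideal.span_mono
    rintro a ⟨f, hfI, hford, hfc⟩
    refine ⟨X * f, I.mul_mem_left _ hfI, ?_, ?_⟩
    · intro j hj
      cases j with
      | zero => exact coeff_zero_X_mul f
      | succ j' => rw [coeff_succ_X_mul]; exact hford j' (by omega)
    · rw [coeff_succ_X_mul]; exact hfc
  obtain ⟨N, hN⟩ := monotone_stabilizes_iff_noetherian.mpr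
    (inferInstance : IsNoetherian O O) ⟨J, hmono⟩
  -- generators with witnesses
  set g : ℕ → PowerSeries O := fun k =>
    (W k (Submodule.IsPrincipal.generator (J k)) (Submodule.IsPrincipal.generator_mem _)).choose
    with hg
  have hgspec : ∀ k, g k ∈ I ∧ (∀ j, j < k → coeff j (g k) = 0) ∧
      coeff k (g k) = Submodule.IsPrincipal.generator (J k) := fun k =>
    (W k (Submodule.IsPrincipal.generator (J k)) (Submodule.IsPrincipal.generator_mem _)).choose_spec
  set Sp : Ideal (PowerSeries O) := Ideal.span (Set.range fun k : Fin (N + 1) => g k) with hSp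
  have hSpI : Sp ≤ I := by
    rw [hSp, Ideal.span_le]
    rintro _ ⟨k, rfl⟩
    exact (hgspec k).1
  have hgSp : ∀ k, k ≤ N → g k ∈ Sp := by
    intro k hk
    exact Ideal.subset_span ⟨⟨k, by omega⟩, rfl⟩
  -- membership in span of generator
  have hJmem : ∀ k (a : O), a ∈ J k → ∃ c, a = c * Submodule.IsPrincipal.generator (J k) := by
    intro k a ha
    rw [← Ideal.span_singleton_generator (J k), Ideal.mem_span_singleton] at ha
    obtain ⟨c, hc⟩ := ha
    exact ⟨c, by rw [hc, mul_comm]⟩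
  have hcsJ : ∀ k (f : PowerSeries O), f ∈ I → (∀ j, j < k → coeff j f = 0) →
      coeff k f ∈ J k := by
    intro k f h1 h2
    exact Ideal.subset_span ⟨f, h1, h2, rfl⟩
  refine ⟨(Set.finite_range fun k : Fin (N + 1) => g k).toFinset, ?_⟩
  rw [Set.Finite.coe_toFinset]
  refine le_antisymm hSpI ?_
  intro h hI
  -- stage 1
  have stage : ∀ k, k ≤ N → ∃ h', h' ∈ I ∧ (∀ j, j < k → coeff j h' = 0) ∧ h - h' ∈ Sp := by
    intro k
    induction k with
    | zero => exact fun _ => ⟨h, hI, fun j hj => absurd hj (Nat.not_lt_zero j), by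
        rw [sub_self]; exact Sp.zero_mem⟩
    | succ k ih =>
      intro hk1
      obtain ⟨h', h'I, h'ord, h'sub⟩ := ih (by omega)
      obtain ⟨c, hc⟩ := hJmem k _ (hcsJ k h' h'I h'ord)
      refine ⟨h' - C c * g k, I.sub_mem h'I (I.mul_mem_left _ (hgspec k).1), ?_, ?_⟩
      · intro j hj
        rw [map_sub, coeff_C_mul]
        rcases Nat.lt_succ_iff_lt_or_eq.mp hj with hlt | heq
        · rw [h'ord j hlt, (hgspec k).2.1 j hlt, mul_zero, sub_self]
        · rw [heq, hc, (hgspec k).2.2, sub_self]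
      · have : h - (h' - C c * g k) = (h - h') + C c * g k := by ring
        rw [this]
        exact Sp.add_mem h'sub (Sp.mul_mem_left _ (hgSp k (by omega)))
  obtain ⟨h', h'I, h'ord, h'sub⟩ := stage N le_rfl
  -- stage 2
  have hbN : ∀ h'' ∈ I, ∀ k, N ≤ k → (∀ j, j < k → coeff j h'' = 0) →
      ∃ c : O, coeff k h'' = c * coeff N (g N) := by
    intro h'' h''I k hk h''ord
    have hmem : coeff k h'' ∈ J k := hcsJ k h'' h''I h''ord
    have : J N = J k := hN k hk
    rw [← this] at hmem
    obtain ⟨c, hc⟩ := hJmem N _ hmem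
    exact ⟨c, by rw [hc, (hgspec N).2.2]⟩
  obtain ⟨u, hu⟩ := aux_ord_factor I N (g N) (hgspec N).1 (hgspec N).2.1 hbN h'I h'ord
  have : h = (h - h') + u * g N := by rw [← hu]; ring
  rw [this]
  exact Sp.add_mem h'sub (Sp.mul_mem_left _ (hgSp N le_rfl))

end Noeth2

section MinGen
variable {R : Type*} [CommRing R] {K : Type*} [AddCommGroup K] [Module R K]

/-- A minimal generating family: any linear relation has all coefficients non-units. -/
theorem aux_min_gen [Module.Finite R K] :
    ∃ (r : ℕ) (s : Fin r → K), Submodule.span R (Set.range s) = ⊤ ∧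
      ∀ v : Fin r → R, (∑ i, v i • s i) = 0 → ∀ i, ¬IsUnit (v i) := by
  classical
  have hP : ∃ r : ℕ, ∃ s : Fin r → K, Submodule.span R (Set.range s) = ⊤ :=
    Module.Finite.exists_fin
  obtain ⟨r₀, hPr₀, hmin⟩ : ∃ r₀, (∃ s : Fin r₀ → K, Submodule.span R (Set.range s) = ⊤) ∧
      ∀ m, m < r₀ → ¬∃ s : Fin m → K, Submodule.span R (Set.range s) = ⊤ :=
    ⟨Nat.find hP, Nat.find_spec hP, fun m hm => Nat.find_min hP hm⟩
  obtain ⟨s, hs⟩ := hPr₀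
  refine ⟨r₀, s, hs, ?_⟩
  intro v hv i hui
  cases r₀ with
  | zero => exact i.elim0
  | succ r' =>
    apply hmin r' (Nat.lt_succ_self r')
    refine ⟨s ∘ i.succAbove, ?_⟩
    set Nsub := Submodule.span R (Set.range (s ∘ i.succAbove)) with hNsub
    have hmem : ∀ k, s k ∈ Nsub := by
      intro k
      by_cases hki : k = i
      · subst hki
        -- s k = u⁻¹ • (v k • s k), and v k • s k = -∑ over erase
        have hsum : v k • s k + ∑ j ∈ Finset.univ.erase k, v j • s j = 0 := by
          rw [Finset.add_sum_erase Finset.univ (fun j => v j • s j) (Finset.mem_univ k)]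
          exact hv
        have hvk : v k • s k = -∑ j ∈ Finset.univ.erase k, v j • s j :=
          eq_neg_of_add_eq_zero_left hsum
        have herase : (∑ j ∈ Finset.univ.erase k, v j • s j) ∈ Nsub := by
          apply Submodule.sum_mem
          intro j hj
          have hji : j ≠ k := Finset.ne_of_mem_erase hj
          obtain ⟨j', hj'⟩ := Fin.exists_succAbove_eq hji
          exact Submodule.smul_mem _ _ (Submodule.subset_span
            ⟨j', by rw [Function.comp_apply, hj']⟩)
        have : s k = (↑hui.unit⁻¹ : R) • (v k • s k) := by
          rw [smul_smul, hui.val_inv_mul, one_smul]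
        rw [this, hvk]
        exact Submodule.smul_mem _ _ (Submodule.neg_mem _ herase)
      · obtain ⟨k', hk'⟩ := Fin.exists_succAbove_eq hki
        exact Submodule.subset_span ⟨k', by rw [Function.comp_apply, hk']⟩
    rw [eq_top_iff, ← hs, Submodule.span_le]
    rintro _ ⟨k, rfl⟩
    exact hmem k

end MinGen

section Back
variable {O : Type*} [CommRing O] [IsDomain O] [IsDiscreteValuationRing O]
variable {p : O} (hp : Irreducible p)

include hp in
theorem aux_sep {a : O} (h : ∀ e : ℕ, p ^ e ∣ a) : a = 0 := by
  by_contra ha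
  obtain ⟨n, u, hnu⟩ := IsDiscreteValuationRing.eq_unit_mul_pow_irreducible ha hp
  obtain ⟨t, ht⟩ := h (n + 1)
  rw [hnu] at ht
  have h2 : (u : O) * p ^ n = (p * t) * p ^ n := by rw [ht]; ring
  have h3 : (u : O) = p * t := mul_right_cancel₀ (pow_ne_zero n hp.ne_zero) h2
  exact hp.not_isUnit (isUnit_of_dvd_unit ⟨t, h3⟩ u.isUnit)

include hp in
theorem aux_decomp {a : PowerSeries O} (ha : ¬IsUnit a) :
    ∃ u w, a = C p * u + X * w := by
  have hc : ¬IsUnit (constantCoeff a) := fun h => ha (isUnit_iff_constantCoeff.mpr h)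
  have hmem : constantCoeff a ∈ IsLocalRing.maximalIdeal O := hc
  rw [hp.maximalIdeal_eq, Ideal.mem_span_singleton] at hmem
  obtain ⟨t, ht⟩ := hmem
  have hX : (X : PowerSeries O) ∣ a - C (constantCoeff a) := by
    rw [PowerSeries.X_dvd_iff, map_sub, PowerSeries.constantCoeff_C, sub_self]
  obtain ⟨w, hw⟩ := hX
  refine ⟨C t, w, ?_⟩
  have : a = C (constantCoeff a) + X * w := by rw [← hw]; ring
  rw [this, ht, map_mul]

variable {M : Type*} [AddCommGroup M] [Module (PowerSeries O) M]

include hp in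
theorem aux_backward_core [Module.Finite (PowerSeries O) M]
    (hM : ∀ y : M, (C p : PowerSeries O) • y = 0 → (X : PowerSeries O) • y = 0 → y = 0)
    {n : ℕ} (f : (Fin n → PowerSeries O) →ₗ[PowerSeries O] M) (hf : Function.Surjective f) :
    Module.Projective (PowerSeries O) (LinearMap.ker f) := by
  classical
  haveI : IsNoetherianRing (PowerSeries O) := aux_noetherian
  haveI : Module.Finite (PowerSeries O) (LinearMap.ker f) :=
    Module.Finite.iff_fg.mpr (IsNoetherian.noetherian _)
  obtain ⟨r, s, hs, hmin⟩ := aux_min_gen (R := PowerSeries O) (K := LinearMap.ker f)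
  set g : (Fin r → PowerSeries O) →ₗ[PowerSeries O] LinearMap.ker f :=
    Fintype.linearCombination (PowerSeries O) s with hgdef
  have hgsurj : Function.Surjective g := by
    rw [← LinearMap.range_eq_top, hgdef, Fintype.range_linearCombination, hs]
  have hnonunit : ∀ v ∈ LinearMap.ker g, ∀ i, ¬IsUnit (v i) := by
    intro v hv i
    apply hmin v _ i
    have := LinearMap.mem_ker.mp hv
    rwa [hgdef, Fintype.linearCombination_apply] at this
  -- the syzygy chase
  have chase : ∀ v ∈ LinearMap.ker g, ∃ v1 ∈ LinearMap.ker g, ∃ v2 ∈ LinearMap.ker g,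
      v = (C p : PowerSeries O) • v1 + (X : PowerSeries O) • v2 := by
    intro v hv
    choose pp qq hpq using fun i => aux_decomp hp (hnonunit v hv i)
    have hvdec : v = (C p : PowerSeries O) • pp + (X : PowerSeries O) • qq :=
      funext fun i => hpq i
    have hrel : (C p : PowerSeries O) • g pp + (X : PowerSeries O) • g qq = 0 := by
      rw [← map_smul, ← map_smul, ← map_add, ← hvdec]
      exact LinearMap.mem_ker.mp hv
    set aF : Fin n → PowerSeries O := (g pp : Fin n → PowerSeries O) with haF
    set bF : Fin n → PowerSeries O := (g qq : Fin n → PowerSeries O) with hbF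
    have hrelF : ∀ i, C p * aF i + X * bF i = 0 := by
      intro i
      have := congrArg (fun x : LinearMap.ker f => (x : Fin n → PowerSeries O) i) hrel
      simpa [haF, hbF] using this
    choose z hz1 hz2 using fun i => aux_key_div hp
      (show X * bF i = C p * (-(aF i)) from by
        rw [mul_neg]; linear_combination hrelF i)
    set c : Fin n → PowerSeries O := fun i => -(z i) with hcdef
    have hXc : (X : PowerSeries O) • c = aF := by
      funext i
      show X * (-(z i)) = aF i
      rw [mul_neg, ← hz2 i, neg_neg]
    have hpc : (C p : PowerSeries O) • c = -bF := by
      funext i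
      show C p * (-(z i)) = -(bF i)
      rw [mul_neg, ← hz1 i]
    have hfc : f c = 0 := by
      apply hM
      · rw [← map_smul, hpc, map_neg]
        have : bF ∈ LinearMap.ker f := (g qq).2
        rw [LinearMap.mem_ker.mp this, neg_zero]
      · rw [← map_smul, hXc]
        exact (g pp).2
    obtain ⟨w, hw⟩ := hgsurj ⟨c, LinearMap.mem_ker.mpr hfc⟩
    refine ⟨pp - (X : PowerSeries O) • w, ?_, qq + (C p : PowerSeries O) • w, ?_, ?_⟩
    · rw [LinearMap.mem_ker, map_sub, map_smul, hw]
      apply Subtype.ext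
      show aF - X • c = 0
      rw [hXc, sub_self]
    · rw [LinearMap.mem_ker, map_add, map_smul, hw]
      apply Subtype.ext
      show bF + C p • c = 0
      rw [hpc, add_neg_cancel]
    · rw [smul_sub, smul_add, hvdec]
      have hcomm : (C p : PowerSeries O) • ((X : PowerSeries O) • w) =
          (X : PowerSeries O) • ((C p : PowerSeries O) • w) := by
        rw [smul_smul, smul_smul, mul_comm]
      rw [hcomm]
      abel
  -- coefficientwise divisibility
  have hcoeff : ∀ k, ∀ v ∈ LinearMap.ker g, ∀ i j, p ^ (k - j) ∣ coeff j (v i) := by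
    intro k
    induction k with
    | zero => intro v hv i j; simpa using one_dvd _
    | succ k ih =>
      intro v hv i j
      obtain ⟨v1, hv1, v2, hv2, hdec⟩ := chase v hv
      have hvi : v i = C p * v1 i + X * v2 i := by rw [hdec]; rfl
      rw [hvi, map_add, coeff_C_mul]
      apply dvd_add
      · calc p ^ (k + 1 - j) ∣ p ^ ((k - j) + 1) := pow_dvd_pow p (by omega)
          _ = p * p ^ (k - j) := by rw [pow_succ']
          _ ∣ p * coeff j (v1 i) := mul_dvd_mul_left p (ih v1 hv1 i j)
      · cases j with
        | zero => rw [coeff_zero_X_mul]; exact dvd_zero _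
        | succ j' =>
          rw [coeff_succ_X_mul]
          have : k + 1 - (j' + 1) = k - j' := by omega
          rw [this]
          exact ih v2 hv2 i j'
  have hker : LinearMap.ker g = ⊥ := by
    rw [Submodule.eq_bot_iff]
    intro v hv
    funext i
    ext j
    have h0 : (0 : Fin r → PowerSeries O) i = 0 := rfl
    rw [h0, map_zero]
    exact aux_sep hp fun e => by
      have h' := hcoeff (j + e) v hv i j
      rwa [show j + e - j = e from by omega] at h'
  have hinj : Function.Injective g := LinearMap.ker_eq_bot.mp hker
  have hfreeF : Module.Free (PowerSeries O) (Fin r → PowerSeries O) :=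
    Module.Free.of_basis (Pi.basisFun (PowerSeries O) (Fin r))
  have hfree : Module.Free (PowerSeries O) (LinearMap.ker f) :=
    Module.Free.of_equiv' hfreeF (LinearEquiv.ofBijective g ⟨hinj, hgsurj⟩)
  exact @Module.Projective.of_free _ _ _ _ _ hfree

end Back

/-- Over `Λ = 𝒪[[T]]` with `𝒪` a complete DVR with finite residue field, a finitely
generated `Λ`-module `M` is torsion of projective dimension `≤ 1` (expressed as a
surjection from a finite free module with projective kernel) if and only if it is
torsion with no nonzero finite submodule. -/
theorem torsion_pd_le_one_iff_no_finite_submodule (O : Type*) [CommRing O] [IsDomain O]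
    [IsDiscreteValuationRing O] [IsAdicComplete (IsLocalRing.maximalIdeal O) O]
    [Finite (IsLocalRing.ResidueField O)]
    (M : Type*) [AddCommGroup M] [Module (PowerSeries O) M]
    [Module.Finite (PowerSeries O) M] :
    (Module.IsTorsion (PowerSeries O) M ∧
        ∃ (n : ℕ) (f : (Fin n → PowerSeries O) →ₗ[PowerSeries O] M),
          Function.Surjective f ∧ Module.Projective (PowerSeries O) (LinearMap.ker f)) ↔
      (Module.IsTorsion (PowerSeries O) M ∧
        ∀ P : Submodule (PowerSeries O) M, (P : Set M).Finite → P = ⊥) := by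
  obtain ⟨p, hp⟩ := IsDiscreteValuationRing.exists_irreducible O
  constructor
  · rintro ⟨htors, n, f, hfsurj, hproj⟩
    refine ⟨htors, ?_⟩
    intro P hPfin
    by_contra hPne
    obtain ⟨x, hxP, hx0⟩ := (Submodule.ne_bot_iff P).mp hPne
    obtain ⟨y, hy0, hy1, hy2⟩ := aux_exists_y hp hPfin hxP hx0
    haveI := hproj
    exact hy0 (aux_forward_core hp f hfsurj hy1 hy2)
  · rintro ⟨htors, hfin⟩
    refine ⟨htors, ?_⟩
    have hM : ∀ y : M, (C p : PowerSeries O) • y = 0 → (X : PowerSeries O) • y = 0 → y = 0 := by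
      intro y h1 h2
      have hfinspan := aux_span_finite hp h1 h2
      have hbot := hfin _ hfinspan
      have hy : y ∈ Submodule.span (PowerSeries O) {y} := Submodule.mem_span_singleton_self y
      rw [hbot] at hy
      simpa using hy
    obtain ⟨n, f, hf⟩ := Module.Finite.exists_fin' (PowerSeries O) M
    exact ⟨n, f, hf, aux_backward_core hp hM f hf⟩
end
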